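/- Suppose Assumptions 1 and 3 hold. Fix an initial time t0 ≥ 0 and define B(t) = A((t+1)L − 1 + t0) ⋯ A(tL + 1 + t0) A(tL + t0) for each t ≥ 0, with entries b_ij(t). Let G_p' = (V, E_p') be the directed graph where (j,i) ∈ E_p' if and only if ∑_{t=0}^∞ b_ij(t) = ∞. Then the persistent graph G_p contains a directed spanning tree if and only if G_p' contains a directed spanning tree. -/

import Mathlib

open Filter Finset

/-- Arc `(j,i)` is persistent: `∑_{t=0}^∞ a_ij(t) = ∞`, where `a_ij(t) = A t i j`. -/
def PersistentArc {N : ℕ} (A : ℕ → Matrix (Fin N) (Fin N) ℝ) (j i : Fin N) : Prop :=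
  Tendsto (fun n => ∑ t ∈ Finset.range n, A t i j) atTop atTop

/-- A directed graph (given by its arc relation) contains a directed spanning tree:
there is a root from which every node is reachable along directed paths. -/
def HasDirectedSpanningTree {N : ℕ} (arc : Fin N → Fin N → Prop) : Prop :=
  ∃ r : Fin N, ∀ i : Fin N, Relation.ReflTransGen arc r i

/-- `Bmat A L t0 t = A((t+1)L − 1 + t0) ⋯ A(tL + 1 + t0) A(tL + t0)`. -/
def Bmat {N : ℕ} (A : ℕ → Matrix (Fin N) (Fin N) ℝ) (L t0 t : ℕ) :
    Matrix (Fin N) (Fin N) ℝ :=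
  (List.ofFn (fun u : Fin L => A ((t + 1) * L - 1 - (u : ℕ) + t0))).prod

section Stmt9Aux

variable {N : ℕ}

lemma listProd_nonneg (l : List (Matrix (Fin N) (Fin N) ℝ))
    (h : ∀ M ∈ l, ∀ i j, 0 ≤ M i j) : ∀ i j, 0 ≤ l.prod i j := by
  induction l with
  | nil => intro i j; simp [Matrix.one_apply]; positivity
  | cons M l ih =>
    intro i j
    rw [List.prod_cons, Matrix.mul_apply]
    exact Finset.sum_nonneg fun k _ => mul_nonneg (h M (by simp) i k)
      (ih (fun M' hM' => h M' (by simp [hM'])) k j)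

lemma listProd_rowsum (l : List (Matrix (Fin N) (Fin N) ℝ))
    (h : ∀ M ∈ l, ∀ i j, 0 ≤ M i j) (hr : ∀ M ∈ l, ∀ i, ∑ j, M i j = 1) :
    ∀ i, ∑ j, l.prod i j = 1 := by
  induction l with
  | nil => intro i; simp [Matrix.one_apply]
  | cons M l ih =>
    intro i
    simp only [List.prod_cons, Matrix.mul_apply]
    rw [Finset.sum_comm]
    calc ∑ k, ∑ j, M i k * l.prod k j
        = ∑ k, M i k * ∑ j, l.prod k j := by simp [Finset.mul_sum]
      _ = 1 := by
          simp only [ih (fun M' hM' => h M' (by simp [hM']))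
            (fun M' hM' => hr M' (by simp [hM'])), mul_one]
          exact hr M (by simp) i

lemma mul_entry_ge (P Q : Matrix (Fin N) (Fin N) ℝ)
    (hP : ∀ i j, 0 ≤ P i j) (hQ : ∀ i j, 0 ≤ Q i j) (i k j : Fin N) :
    P i k * Q k j ≤ (P * Q) i j := by
  rw [Matrix.mul_apply]
  exact Finset.single_le_sum (f := fun m => P i m * Q m j)
    (fun m _ => mul_nonneg (hP i m) (hQ m j)) (Finset.mem_univ k)

lemma listProd_diag {η : ℝ} (hη : 0 ≤ η) (l : List (Matrix (Fin N) (Fin N) ℝ))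
    (h : ∀ M ∈ l, ∀ i j, 0 ≤ M i j) (hd : ∀ M ∈ l, ∀ i, η ≤ M i i) :
    ∀ i, η ^ l.length ≤ l.prod i i := by
  induction l with
  | nil => intro i; simp [Matrix.one_apply]
  | cons M l ih =>
    intro i
    have h1 : M i i * l.prod i i ≤ (M * l.prod) i i :=
      mul_entry_ge M l.prod (h M (by simp))
        (listProd_nonneg l (fun M' hM' => h M' (by simp [hM']))) i i i
    rw [List.prod_cons]
    calc η ^ (M :: l).length = η * η ^ l.length := by rw [List.length_cons, pow_succ']
      _ ≤ M i i * l.prod i i := by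
          apply mul_le_mul (hd M (by simp) i)
            (ih (fun M' hM' => h M' (by simp [hM'])) (fun M' hM' => hd M' (by simp [hM'])) i)
            (by positivity) (le_trans hη (hd M (by simp) i))
      _ ≤ _ := h1

lemma listProd_split {η : ℝ} (hη : 0 ≤ η) (l1 l2 : List (Matrix (Fin N) (Fin N) ℝ))
    (M : Matrix (Fin N) (Fin N) ℝ)
    (h : ∀ P ∈ l1 ++ M :: l2, ∀ i j, 0 ≤ P i j)
    (hd : ∀ P ∈ l1 ++ M :: l2, ∀ i, η ≤ P i i) (i j : Fin N) :
    η ^ (l1.length + l2.length) * M i j ≤ (l1 ++ M :: l2).prod i j := by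
  have h1 : ∀ P ∈ l1, ∀ i j, 0 ≤ P i j := fun P hP => h P (by simp [hP])
  have h2 : ∀ P ∈ l2, ∀ i j, 0 ≤ P i j := fun P hP => h P (by simp [hP])
  have hM : ∀ i j, 0 ≤ M i j := h M (by simp)
  have e : (l1 ++ M :: l2).prod = l1.prod * (M * l2.prod) := by
    rw [List.prod_append, List.prod_cons]
  rw [e]
  have hMl2 : ∀ i j, 0 ≤ (M * l2.prod) i j := by
    intro i j; rw [Matrix.mul_apply]
    exact Finset.sum_nonneg fun k _ => mul_nonneg (hM i k) (listProd_nonneg l2 h2 k j)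
  calc η ^ (l1.length + l2.length) * M i j
      = (η ^ l1.length) * (M i j * η ^ l2.length) := by ring
    _ ≤ l1.prod i i * (M i j * l2.prod j j) := by
        apply mul_le_mul (listProd_diag hη l1 h1 (fun P hP i => hd P (by simp [hP]) i) i)
          (by
            apply mul_le_mul_of_nonneg_left _ (hM i j)
            exact listProd_diag hη l2 h2 (fun P hP i => hd P (by simp [List.mem_append, hP]) i) j)
          (mul_nonneg (hM i j) (by positivity)) (listProd_nonneg l1 h1 i i)
    _ ≤ l1.prod i i * (M * l2.prod) i j := by
        apply mul_le_mul_of_nonneg_left _ (listProd_nonneg l1 h1 i i)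
        exact mul_entry_ge M l2.prod hM (listProd_nonneg l2 h2) i j j
    _ ≤ _ := mul_entry_ge l1.prod (M * l2.prod) (listProd_nonneg l1 h1) hMl2 i i j

lemma cut_bound (C : Finset (Fin N)) (l : List (Matrix (Fin N) (Fin N) ℝ))
    (h : ∀ M ∈ l, ∀ i j, 0 ≤ M i j) (hr : ∀ M ∈ l, ∀ i, ∑ j, M i j = 1) :
    ∀ i ∉ C, ∑ k ∈ C, l.prod i k ≤ (l.map (fun M => ∑ p ∈ Cᶜ, ∑ q ∈ C, M p q)).sum := by
  induction l with
  | nil =>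
    intro i hi
    simp only [List.map_nil, List.sum_nil, List.prod_nil]
    apply le_of_eq
    apply Finset.sum_eq_zero
    intro k hk
    rw [Matrix.one_apply_ne]
    rintro rfl; exact hi hk
  | cons M l ih =>
    intro i hi
    have h' : ∀ M' ∈ l, ∀ i j, 0 ≤ M' i j := fun M' hM' => h M' (by simp [hM'])
    have hr' : ∀ M' ∈ l, ∀ i, ∑ j, M' i j = 1 := fun M' hM' => hr M' (by simp [hM'])
    have hM : ∀ i j, 0 ≤ M i j := h M (by simp)
    have hPn := listProd_nonneg l h'
    have hPr := listProd_rowsum l h' hr'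
    set D := (l.map (fun M => ∑ p ∈ Cᶜ, ∑ q ∈ C, M p q)).sum with hD
    have hD0 : 0 ≤ D := by
      rw [hD]
      apply List.sum_nonneg
      intro x hx
      simp only [List.mem_map] at hx
      obtain ⟨M', hM', rfl⟩ := hx
      exact Finset.sum_nonneg fun p _ => Finset.sum_nonneg fun q _ => h' M' hM' p q
    have hrowsub : ∀ p, ∑ k ∈ C, l.prod p k ≤ 1 := by
      intro p
      rw [← hPr p]
      exact Finset.sum_le_sum_of_subset_of_nonneg (Finset.subset_univ C)
        (fun k _ _ => hPn p k)
    have key : ∑ k ∈ C, (M :: l).prod i k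
        = ∑ p ∈ C, M i p * ∑ k ∈ C, l.prod p k
          + ∑ p ∈ Cᶜ, M i p * ∑ k ∈ C, l.prod p k := by
      simp only [List.prod_cons, Matrix.mul_apply]
      rw [Finset.sum_comm]
      simp only [← Finset.mul_sum]
      rw [Finset.sum_add_sum_compl C (fun p => M i p * ∑ k ∈ C, l.prod p k)]
    rw [key]
    have b1 : ∑ p ∈ C, M i p * ∑ k ∈ C, l.prod p k ≤ ∑ p ∈ Cᶜ, ∑ q ∈ C, M p q := by
      calc ∑ p ∈ C, M i p * ∑ k ∈ C, l.prod p k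
          ≤ ∑ p ∈ C, M i p := by
            apply Finset.sum_le_sum
            intro p _
            exact mul_le_of_le_one_right (hM i p) (hrowsub p)
        _ ≤ ∑ p ∈ Cᶜ, ∑ q ∈ C, M p q := by
            apply Finset.single_le_sum (f := fun p' => ∑ q ∈ C, M p' q)
              (fun p' _ => Finset.sum_nonneg fun q _ => hM p' q)
            simpa using hi
    have b2 : ∑ p ∈ Cᶜ, M i p * ∑ k ∈ C, l.prod p k ≤ D := by
      calc ∑ p ∈ Cᶜ, M i p * ∑ k ∈ C, l.prod p k
          ≤ ∑ p ∈ Cᶜ, M i p * D := by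
            apply Finset.sum_le_sum
            intro p hp
            exact mul_le_mul_of_nonneg_left (ih h' hr' p (by simpa using hp)) (hM i p)
        _ = (∑ p ∈ Cᶜ, M i p) * D := by rw [Finset.sum_mul]
        _ ≤ 1 * D := by
            apply mul_le_mul_of_nonneg_right _ hD0
            rw [← hr M (by simp) i]
            exact Finset.sum_le_sum_of_subset_of_nonneg (Finset.subset_univ Cᶜ)
              (fun k _ _ => hM i k)
        _ = D := one_mul D
    calc ∑ p ∈ C, M i p * ∑ k ∈ C, l.prod p k + ∑ p ∈ Cᶜ, M i p * ∑ k ∈ C, l.prod p k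
        ≤ (∑ p ∈ Cᶜ, ∑ q ∈ C, M p q) + D := add_le_add b1 b2
      _ = ((M :: l).map (fun M => ∑ p ∈ Cᶜ, ∑ q ∈ C, M p q)).sum := by
          simp [hD]

lemma block_sum (f : ℕ → ℝ) (L t0 : ℕ) :
    ∀ n, ∑ t ∈ range n, ∑ v ∈ range L, f (t * L + v + t0)
      = ∑ s ∈ Finset.Ico t0 (n * L + t0), f s := by
  intro n
  induction n with
  | zero => simp
  | succ n ih =>
    have e1 : (n + 1) * L = n * L + L := by ring
    rw [Finset.sum_range_succ, ih,
      ← Finset.sum_Ico_consecutive f (by omega : t0 ≤ n * L + t0)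
        (by omega : n * L + t0 ≤ (n + 1) * L + t0)]
    congr 1
    rw [Finset.sum_Ico_eq_sum_range]
    have hlen : (n + 1) * L + t0 - (n * L + t0) = L := by omega
    rw [hlen]
    exact Finset.sum_congr rfl fun v _ => congrArg f (by omega)

lemma bmat_member (A : ℕ → Matrix (Fin N) (Fin N) ℝ) (L t0 t : ℕ)
    {M : Matrix (Fin N) (Fin N) ℝ}
    (hM : M ∈ List.ofFn (fun u : Fin L => A ((t + 1) * L - 1 - (u : ℕ) + t0))) :
    ∃ s, M = A s := by
  rw [List.mem_ofFn] at hM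
  obtain ⟨u, rfl⟩ := hM
  exact ⟨_, rfl⟩

lemma bmat_nonneg (A : ℕ → Matrix (Fin N) (Fin N) ℝ)
    (hnonneg : ∀ t i j, 0 ≤ A t i j) (L t0 t : ℕ) (i j : Fin N) :
    0 ≤ Bmat A L t0 t i j := by
  apply listProd_nonneg
  intro M hM i j
  obtain ⟨s, rfl⟩ := bmat_member A L t0 t hM
  exact hnonneg s i j

lemma bmat_lower (A : ℕ → Matrix (Fin N) (Fin N) ℝ) {η : ℝ} (hη0 : 0 < η)
    (hnonneg : ∀ t i j, 0 ≤ A t i j) (hdiag : ∀ t i, η ≤ A t i i)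
    (L t0 : ℕ) (t v : ℕ) (hv : v < L) (i j : Fin N) :
    η ^ (L - 1) * A (t * L + v + t0) i j ≤ Bmat A L t0 t i j := by
  have e1 : (t + 1) * L = t * L + L := by ring
  set f : Fin L → Matrix (Fin N) (Fin N) ℝ :=
    fun u : Fin L => A ((t + 1) * L - 1 - (u : ℕ) + t0) with hf
  have hu : L - 1 - v < (List.ofFn f).length := by
    rw [List.length_ofFn]; omega
  have hget : (List.ofFn f)[L - 1 - v] = A (t * L + v + t0) := by
    rw [List.getElem_ofFn]
    exact congrArg A (by simp only; omega)
  have hdecomp : List.ofFn f = (List.ofFn f).take (L - 1 - v) ++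
      A (t * L + v + t0) :: (List.ofFn f).drop (L - 1 - v + 1) := by
    conv_lhs => rw [← List.take_append_drop (L - 1 - v) (List.ofFn f)]
    rw [List.drop_eq_getElem_cons hu, hget]
  have hmem : ∀ M ∈ List.ofFn f, ∃ s, M = A s := fun M hM => bmat_member A L t0 t hM
  have hln : ∀ M ∈ List.ofFn f, ∀ i j, 0 ≤ M i j := by
    intro M hM i j; obtain ⟨s, rfl⟩ := hmem M hM; exact hnonneg s i j
  have hld : ∀ M ∈ List.ofFn f, ∀ i, η ≤ M i i := by
    intro M hM i; obtain ⟨s, rfl⟩ := hmem M hM; exact hdiag s i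
  have hsplit := listProd_split hη0.le ((List.ofFn f).take (L - 1 - v))
    ((List.ofFn f).drop (L - 1 - v + 1)) (A (t * L + v + t0))
    (by rw [← hdecomp]; exact hln) (by rw [← hdecomp]; exact hld) i j
  rw [← hdecomp] at hsplit
  show η ^ (L - 1) * A (t * L + v + t0) i j ≤ (List.ofFn f).prod i j
  refine le_trans (le_of_eq ?_) hsplit
  congr 2
  rw [List.length_take, List.length_drop, List.length_ofFn]
  omega

lemma bmat_cut (A : ℕ → Matrix (Fin N) (Fin N) ℝ)
    (hnonneg : ∀ t i j, 0 ≤ A t i j) (hrow : ∀ t i, ∑ j, A t i j = 1)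
    (L t0 t : ℕ) (C : Finset (Fin N)) (i : Fin N) (hi : i ∉ C) (j : Fin N) (hj : j ∈ C) :
    Bmat A L t0 t i j ≤ ∑ v ∈ range L, ∑ p ∈ Cᶜ, ∑ q ∈ C, A (t * L + v + t0) p q := by
  have e1 : (t + 1) * L = t * L + L := by ring
  set f : Fin L → Matrix (Fin N) (Fin N) ℝ :=
    fun u : Fin L => A ((t + 1) * L - 1 - (u : ℕ) + t0) with hf
  have hmem : ∀ M ∈ List.ofFn f, ∃ s, M = A s := fun M hM => bmat_member A L t0 t hM
  have hln : ∀ M ∈ List.ofFn f, ∀ i j, 0 ≤ M i j := by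
    intro M hM i j; obtain ⟨s, rfl⟩ := hmem M hM; exact hnonneg s i j
  have hlr : ∀ M ∈ List.ofFn f, ∀ i, ∑ j, M i j = 1 := by
    intro M hM i; obtain ⟨s, rfl⟩ := hmem M hM; exact hrow s i
  have h1 : Bmat A L t0 t i j ≤ ∑ k ∈ C, Bmat A L t0 t i k :=
    Finset.single_le_sum (f := fun k => Bmat A L t0 t i k)
      (fun k _ => bmat_nonneg A hnonneg L t0 t i k) hj
  have h2 : ∑ k ∈ C, Bmat A L t0 t i k
      ≤ ((List.ofFn f).map (fun M => ∑ p ∈ Cᶜ, ∑ q ∈ C, M p q)).sum :=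
    cut_bound C (List.ofFn f) hln hlr i hi
  have h3 : ((List.ofFn f).map (fun M => ∑ p ∈ Cᶜ, ∑ q ∈ C, M p q)).sum
      = ∑ v ∈ range L, ∑ p ∈ Cᶜ, ∑ q ∈ C, A (t * L + v + t0) p q := by
    rw [List.map_ofFn, List.sum_ofFn]
    show (∑ u : Fin L, ∑ p ∈ Cᶜ, ∑ q ∈ C, A ((t + 1) * L - 1 - (u : ℕ) + t0) p q) = _
    rw [Fin.sum_univ_eq_sum_range
      (fun u => ∑ p ∈ Cᶜ, ∑ q ∈ C, A ((t + 1) * L - 1 - u + t0) p q) L]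
    rw [← Finset.sum_range_reflect (fun v => ∑ p ∈ Cᶜ, ∑ q ∈ C, A (t * L + v + t0) p q) L]
    apply Finset.sum_congr rfl
    intro u hu
    have hu' := Finset.mem_range.mp hu
    have : (t + 1) * L - 1 - u + t0 = t * L + (L - 1 - u) + t0 := by omega
    rw [this]
  exact le_trans h1 (le_trans h2 (le_of_eq h3))

end Stmt9Aux

theorem stmt9 (N : ℕ) (hN : 2 ≤ N) (A : ℕ → Matrix (Fin N) (Fin N) ℝ)
    (η : ℝ) (hη0 : 0 < η) (hη1 : η < 1)
    (hnonneg : ∀ t i j, 0 ≤ A t i j)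
    (hrow : ∀ t i, ∑ j, A t i j = 1)
    (hdiag : ∀ t i, η ≤ A t i i)
    (L : ℕ) (hL : 1 ≤ L) (K : ℝ) (hK : 1 ≤ K)
    (hbal : ∀ S : Finset (Fin N), S.Nonempty → S ≠ Finset.univ → ∀ s : ℕ,
      ∑ t ∈ Finset.Ico s (s + L), ∑ i ∈ Sᶜ, ∑ j ∈ S, A t i j ≤
        K * ∑ t ∈ Finset.Ico s (s + L), ∑ i ∈ S, ∑ j ∈ Sᶜ, A t i j)
    (t0 : ℕ) :
    HasDirectedSpanningTree (PersistentArc A) ↔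
      HasDirectedSpanningTree (fun j i : Fin N =>
        Tendsto (fun n => ∑ t ∈ Finset.range n, Bmat A L t0 t i j) atTop atTop) := by
  classical
  set arcB : Fin N → Fin N → Prop := fun j i =>
    Tendsto (fun n => ∑ t ∈ Finset.range n, Bmat A L t0 t i j) atTop atTop with harcB
  have hLpos : (0:ℝ) < L := by exact_mod_cast Nat.lt_of_lt_of_le Nat.zero_lt_one hL
  -- Forward direction on arcs
  have fwd : ∀ j i, PersistentArc A j i → arcB j i := by
    intro j i hji
    have hc : (0:ℝ) < η ^ (L - 1) / L := div_pos (by positivity) hLpos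
    have hblock : ∀ t, (η ^ (L - 1) / L) * ∑ v ∈ range L, A (t * L + v + t0) i j
        ≤ Bmat A L t0 t i j := by
      intro t
      rw [div_mul_eq_mul_div, div_le_iff₀ hLpos]
      calc η ^ (L - 1) * ∑ v ∈ range L, A (t * L + v + t0) i j
          = ∑ v ∈ range L, η ^ (L - 1) * A (t * L + v + t0) i j := by rw [Finset.mul_sum]
        _ ≤ ∑ v ∈ range L, Bmat A L t0 t i j := by
            apply Finset.sum_le_sum
            intro v hv
            exact bmat_lower A hη0 hnonneg hdiag L t0 t v (Finset.mem_range.mp hv) i j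
        _ = Bmat A L t0 t i j * L := by
            rw [Finset.sum_const, Finset.card_range, nsmul_eq_mul, mul_comm]
    have hlower : ∀ n, (η ^ (L - 1) / L) *
        ((∑ s ∈ range (n * L + t0), A s i j) - ∑ s ∈ range t0, A s i j)
        ≤ ∑ t ∈ range n, Bmat A L t0 t i j := by
      intro n
      have e : (∑ s ∈ range (n * L + t0), A s i j) - ∑ s ∈ range t0, A s i j
          = ∑ t ∈ range n, ∑ v ∈ range L, A (t * L + v + t0) i j := by
        rw [block_sum (fun s => A s i j) L t0 n,
          Finset.sum_Ico_eq_sub _ (by omega : t0 ≤ n * L + t0)]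
      rw [e, Finset.mul_sum]
      exact Finset.sum_le_sum fun t _ => hblock t
    apply tendsto_atTop_mono hlower
    apply Tendsto.const_mul_atTop hc
    apply tendsto_atTop_add_const_right
    apply hji.comp
    apply tendsto_atTop_atTop_of_monotone
      (fun a b hab => by
        have : a * L ≤ b * L := Nat.mul_le_mul_right L hab
        omega)
    intro b
    refine ⟨b, ?_⟩
    have : b ≤ b * L := Nat.le_mul_of_pos_right b (by omega)
    omega
  -- Backward direction on arcs: arcB implies a path in the persistent graph
  have bwd : ∀ j i, arcB j i → Relation.ReflTransGen (PersistentArc A) j i := by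
    intro j i hji
    by_contra hpath
    set C : Finset (Fin N) :=
      Finset.univ.filter (fun k => Relation.ReflTransGen (PersistentArc A) j k) with hC
    have hjC : j ∈ C := by
      simp only [hC, Finset.mem_filter, Finset.mem_univ, true_and]
      exact Relation.ReflTransGen.refl
    have hiC : i ∉ C := by simp only [hC, Finset.mem_filter]; tauto
    -- arcs leaving C are not persistent, hence have bounded partial sums
    have hbdd : ∀ p q : Fin N, ∃ cc : ℝ,
        p ∈ Cᶜ → q ∈ C → ∀ n, ∑ t ∈ range n, A t p q ≤ cc := by
      intro p q
      by_cases hcase : p ∈ Cᶜ ∧ q ∈ C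
      · obtain ⟨hp, hq⟩ := hcase
        have hnp : ¬ PersistentArc A q p := by
          intro hper
          rw [Finset.mem_compl] at hp
          apply hp
          simp only [hC, Finset.mem_filter, Finset.mem_univ, true_and] at hq ⊢
          exact hq.tail hper
        by_contra hcc
        push_neg at hcc
        apply hnp
        apply tendsto_atTop_atTop_of_monotone
        · intro a b hab
          apply Finset.sum_le_sum_of_subset_of_nonneg
            (Finset.range_subset_range.mpr hab) (fun t _ _ => hnonneg t p q)
        · intro b
          obtain ⟨n, hn⟩ := (hcc b).2.2
          exact ⟨n, hn.le⟩
      · exact ⟨0, fun hp hq => absurd ⟨hp, hq⟩ hcase⟩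
    choose c hc using hbdd
    have hh0 : ∀ s, (0:ℝ) ≤ ∑ p ∈ Cᶜ, ∑ q ∈ C, A s p q := fun s =>
      Finset.sum_nonneg fun p _ => Finset.sum_nonneg fun q _ => hnonneg s p q
    -- global bound on partial sums
    have hglobal : ∀ n, ∑ t ∈ range n, Bmat A L t0 t i j
        ≤ ∑ p ∈ Cᶜ, ∑ q ∈ C, c p q := by
      intro n
      calc ∑ t ∈ range n, Bmat A L t0 t i j
          ≤ ∑ t ∈ range n, ∑ v ∈ range L, ∑ p ∈ Cᶜ, ∑ q ∈ C, A (t * L + v + t0) p q := by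
            apply Finset.sum_le_sum
            intro t _
            exact bmat_cut A hnonneg hrow L t0 t C i hiC j hjC
        _ = ∑ s ∈ Finset.Ico t0 (n * L + t0), ∑ p ∈ Cᶜ, ∑ q ∈ C, A s p q :=
            block_sum (fun s => ∑ p ∈ Cᶜ, ∑ q ∈ C, A s p q) L t0 n
        _ ≤ ∑ s ∈ range (n * L + t0), ∑ p ∈ Cᶜ, ∑ q ∈ C, A s p q := by
            apply Finset.sum_le_sum_of_subset_of_nonneg
            · intro s hs
              rw [Finset.mem_range]
              exact (Finset.mem_Ico.mp hs).2
            · intro s _ _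
              exact hh0 s
        _ = ∑ p ∈ Cᶜ, ∑ q ∈ C, ∑ s ∈ range (n * L + t0), A s p q := by
            rw [Finset.sum_comm]
            apply Finset.sum_congr rfl
            intro p _
            rw [Finset.sum_comm]
        _ ≤ ∑ p ∈ Cᶜ, ∑ q ∈ C, c p q := by
            apply Finset.sum_le_sum
            intro p hp
            apply Finset.sum_le_sum
            intro q hq
            exact hc p q hp hq (n * L + t0)
    obtain ⟨n, hn⟩ := (hji.eventually_ge_atTop ((∑ p ∈ Cᶜ, ∑ q ∈ C, c p q) + 1)).exists
    have := hglobal n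
    linarith
  constructor
  · rintro ⟨r, hr⟩
    exact ⟨r, fun i => Relation.ReflTransGen.mono fwd _ _ (hr i)⟩
  · rintro ⟨r, hr⟩
    refine ⟨r, fun i => ?_⟩
    have h1 : Relation.ReflTransGen arcB r i := hr i
    induction h1 with
    | refl => exact Relation.ReflTransGen.refl
    | tail _ h ih => exact ih.trans (bwd _ _ h)
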